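/- Let T be a bounded linear operator on a Banach space X. Then T is uniformly positively expansive if and only if ‖T^n x‖ → ∞ as n → ∞ uniformly on the unit sphere S_X, i.e., for every M > 0 there exists N such that ‖T^n x‖ ≥ M for all n ≥ N and all x with ‖x‖ = 1. -/
import Mathlib


/-- a bounded operator `T` on a Banach space is uniformly positively
expansive (there is `n ∈ ℕ` with `‖T^n x‖ ≥ 2` for all `x` in the unit sphere)
if and only if `‖T^n x‖ → ∞` uniformly on the unit sphere. -/
theorem uniformlyPositivelyExpansive_iff {E : Type*} [NormedAddCommGroup E]
    [NormedSpace ℝ E] [CompleteSpace E] (T : E →L[ℝ] E) :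
    (∃ n : ℕ, ∀ x : E, ‖x‖ = 1 → 2 ≤ ‖(T ^ n) x‖) ↔
      (∀ M : ℝ, 0 < M → ∃ N : ℕ, ∀ n : ℕ, N ≤ n → ∀ x : E, ‖x‖ = 1 →
        M ≤ ‖(T ^ n) x‖) := by
  constructor
  · rintro ⟨n, hn⟩ M hM
    by_cases hE : ∃ x : E, ‖x‖ = 1
    · obtain ⟨x0, hx0⟩ := hE
      have hn1 : 1 ≤ n := by
        by_contra h
        push_neg at h
        interval_cases n
        have := hn x0 hx0
        simp [hx0] at this
      have hnpos : 0 < n := hn1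
      -- key: 2‖x‖ ≤ ‖T^n x‖ for all x
      have key : ∀ x : E, 2 * ‖x‖ ≤ ‖(T ^ n) x‖ := by
        intro x
        rcases eq_or_ne x 0 with rfl | hx
        · simp
        · have hxn : ‖x‖ ≠ 0 := norm_ne_zero_iff.mpr hx
          have h1 : ‖(‖x‖⁻¹ • x)‖ = 1 := by
            rw [norm_smul, norm_inv, norm_norm, inv_mul_cancel₀ hxn]
          have := hn _ h1
          rw [map_smul, norm_smul, norm_inv, norm_norm] at this
          have hpos : (0:ℝ) < ‖x‖ := lt_of_le_of_ne (norm_nonneg x) (Ne.symm hxn)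
          calc 2 * ‖x‖ ≤ (‖x‖⁻¹ * ‖(T ^ n) x‖) * ‖x‖ := by
                apply mul_le_mul_of_nonneg_right this (norm_nonneg x)
            _ = ‖(T ^ n) x‖ := by field_simp
      -- iterate
      have iter : ∀ (k : ℕ) (x : E), 2 ^ k * ‖x‖ ≤ ‖((T ^ n) ^ k) x‖ := by
        intro k
        induction k with
        | zero => intro x; simp
        | succ k ih =>
          intro x
          have : ((T ^ n) ^ (k + 1)) x = ((T ^ n) ^ k) ((T ^ n) x) := by
            rw [pow_succ]; rfl
          rw [this]
          calc 2 ^ (k + 1) * ‖x‖ = 2 ^ k * (2 * ‖x‖) := by ring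
            _ ≤ 2 ^ k * ‖(T ^ n) x‖ := by
                apply mul_le_mul_of_nonneg_left (key x) (by positivity)
            _ ≤ ‖((T ^ n) ^ k) ((T ^ n) x)‖ := ih _
      set C : ℝ := max 1 ‖T‖ ^ n with hC
      have hC1 : (1:ℝ) ≤ C := one_le_pow₀ (le_max_left _ _)
      have hCpos : (0:ℝ) < C := lt_of_lt_of_le one_pos hC1
      -- remainder lower bound: for r ≤ n, 2‖x‖ ≤ C ‖T^r x‖
      have rem : ∀ (r : ℕ), r ≤ n → ∀ x : E, 2 * ‖x‖ ≤ C * ‖(T ^ r) x‖ := by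
        intro r hr x
        have hsplit : (T ^ n) x = (T ^ (n - r)) ((T ^ r) x) := by
          rw [← ContinuousLinearMap.mul_apply, ← pow_add, Nat.sub_add_cancel hr]
        have h1 : ‖(T ^ n) x‖ ≤ ‖T ^ (n - r)‖ * ‖(T ^ r) x‖ := by
          rw [hsplit]; exact (T ^ (n - r)).le_opNorm _
        rcases eq_or_lt_of_le hr with rfl | hrlt
        · calc 2 * ‖x‖ ≤ ‖(T ^ r) x‖ := key x
            _ = 1 * ‖(T ^ r) x‖ := (one_mul _).symm
            _ ≤ C * ‖(T ^ r) x‖ := by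
                apply mul_le_mul_of_nonneg_right hC1 (norm_nonneg _)
        have h2 : ‖T ^ (n - r)‖ ≤ C := by
          calc ‖T ^ (n - r)‖ ≤ ‖T‖ ^ (n - r) := norm_pow_le' T (Nat.sub_pos_of_lt hrlt)
            _ ≤ (max 1 ‖T‖) ^ (n - r) := pow_le_pow_left₀ (norm_nonneg T) (le_max_right _ _) _
            _ ≤ (max 1 ‖T‖) ^ n := pow_le_pow_right₀ (le_max_left _ _) (Nat.sub_le _ _)
        calc 2 * ‖x‖ ≤ ‖(T ^ n) x‖ := key x
          _ ≤ ‖T ^ (n - r)‖ * ‖(T ^ r) x‖ := h1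
          _ ≤ C * ‖(T ^ r) x‖ := by
              apply mul_le_mul_of_nonneg_right h2 (norm_nonneg _)
      -- choose k with M * C ≤ 2^k
      obtain ⟨k, hk⟩ := pow_unbounded_of_one_lt (M * C) (by norm_num : (1:ℝ) < 2)
      refine ⟨k * n, fun m hm x hx => ?_⟩
      set q := m / n
      set r := m % n
      have hqk : k ≤ q := (Nat.le_div_iff_mul_le hnpos).mpr hm
      have hrn : r ≤ n := (Nat.mod_lt m hnpos).le
      have hdecomp : (T ^ m) x = ((T ^ n) ^ q) ((T ^ r) x) := by
        rw [← pow_mul, ← ContinuousLinearMap.mul_apply, ← pow_add]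
        rw [show m = n * q + r from (Nat.div_add_mod m n).symm]
      have h1 : 2 ^ q * ‖(T ^ r) x‖ ≤ ‖(T ^ m) x‖ := by
        rw [hdecomp]; exact iter q _
      have h2 : 2 * ‖x‖ ≤ C * ‖(T ^ r) x‖ := rem r hrn x
      rw [hx, mul_one] at h2
      have h3 : (2 : ℝ) / C ≤ ‖(T ^ r) x‖ := by
        rw [div_le_iff₀ hCpos]; linarith [mul_comm C ‖(T ^ r) x‖ ▸ h2]
      calc M ≤ 2 ^ k / C := by
            rw [le_div_iff₀ hCpos]; linarith [hk.le]
        _ ≤ 2 ^ q * (2 / C) := by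
            rw [div_le_iff₀ hCpos]
            have : (2:ℝ) ^ k ≤ 2 ^ q := pow_le_pow_right₀ (by norm_num) hqk
            calc (2:ℝ) ^ k ≤ 2 ^ q := this
              _ ≤ 2 ^ q * 2 := by nlinarith [pow_pos (by norm_num : (0:ℝ) < 2) q]
              _ = 2 ^ q * (2 / C) * C := by field_simp
        _ ≤ 2 ^ q * ‖(T ^ r) x‖ := by
            apply mul_le_mul_of_nonneg_left h3 (by positivity)
        _ ≤ ‖(T ^ m) x‖ := h1
    · push_neg at hE
      exact ⟨0, fun m _ x hx => absurd hx (hE x)⟩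
  · intro h
    obtain ⟨N, hN⟩ := h 2 (by norm_num)
    exact ⟨N, fun x hx => hN N le_rfl x hx⟩
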